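/- Let w : (0,∞) → (0,∞) be increasing with w(y)/log y → ∞, and suppose that for every ε ∈ (0,1) there exists x_ε > 0 such that ∫₀^x e^{w(u)} du ≥ e^{(1-ε)w(x)} for all x > x_ε. Then for every p > 0 and every ε ∈ (0,p) there exists x_{p,ε} > 0 such that ∫₀^x e^{p w(u)} du ≥ e^{(p-ε)w(x)} for all x > x_{p,ε}. -/

import Mathlib

open Filter MeasureTheory

private lemma aux_memLp (w : ℝ → ℝ) (hm : MonotoneOn w (Set.Ioi 0)) {x : ℝ} (hx : 0 < x)
    {c : ℝ} (hc : 0 ≤ c) (q : ENNReal) :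
    MemLp (fun u => Real.exp (c * w u)) q (MeasureTheory.volume.restrict (Set.Ioc 0 x)) := by
  have hfin : IsFiniteMeasure (MeasureTheory.volume.restrict (Set.Ioc (0:ℝ) x)) :=
    ⟨by simp [Real.volume_Ioc]⟩
  have hmeas : AEMeasurable w (MeasureTheory.volume.restrict (Set.Ioc (0:ℝ) x)) :=
    aemeasurable_restrict_of_monotoneOn measurableSet_Ioc
      (hm.mono Set.Ioc_subset_Ioi_self)
  refine MemLp.of_bound
    ((Real.measurable_exp.comp_aemeasurable (hmeas.const_mul c)).aestronglyMeasurable)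
    (Real.exp (c * w x)) ?_
  filter_upwards [ae_restrict_mem measurableSet_Ioc] with u hu
  rw [Real.norm_eq_abs, Real.abs_exp]
  exact Real.exp_le_exp.2 (mul_le_mul_of_nonneg_left (hm hu.1 hx hu.2) hc)

private lemma aux_intOn (w : ℝ → ℝ) (hm : MonotoneOn w (Set.Ioi 0)) {x : ℝ} (hx : 0 < x)
    {c : ℝ} (hc : 0 ≤ c) :
    IntegrableOn (fun u => Real.exp (c * w u)) (Set.Ioc 0 x) :=
  memLp_one_iff_integrable.1 (aux_memLp w hm hx hc 1)

theorem integral_exp_pw_lower_bound (w : ℝ → ℝ)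
    (hwpos : ∀ y > 0, 0 < w y) (hwmono : StrictMonoOn w (Set.Ioi 0))
    (hwlog : Tendsto (fun y => w y / Real.log y) atTop atTop)
    (hlow : ∀ ε ∈ Set.Ioo (0 : ℝ) 1, ∃ xε > 0, ∀ x > xε,
      Real.exp ((1 - ε) * w x) ≤ ∫ u in Set.Ioc 0 x, Real.exp (w u)) :
    ∀ p > 0, ∀ ε, 0 < ε → ε < p → ∃ xpε > 0, ∀ x > xpε,
      Real.exp ((p - ε) * w x) ≤ ∫ u in Set.Ioc 0 x, Real.exp (p * w u) := by
  intro p hp ε hε hεp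
  have hm : MonotoneOn w (Set.Ioi 0) := hwmono.monotoneOn
  rcases eq_or_ne p 1 with hp1 | hp1
  · subst hp1
    obtain ⟨xε, hxε, h⟩ := hlow ε ⟨hε, hεp⟩
    exact ⟨xε, hxε, fun x hx => by simpa using h x hx⟩
  -- choose auxiliary exponent a and interpolation parameter θ
  set a : ℝ := if p < 1 then 2 else 0 with ha_def
  have ha : 0 ≤ a := by rw [ha_def]; split <;> norm_num
  set θ : ℝ := (1 - a) / (p - a) with hθ_def
  have hθ01 : 0 < θ ∧ θ < 1 := by
    rw [hθ_def, ha_def]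
    rcases lt_or_gt_of_ne hp1 with h | h
    · simp only [if_pos h]
      have heq : ((1:ℝ) - 2) / (p - 2) = 1 / (2 - p) := by
        rw [div_eq_div_iff (by linarith) (by linarith)]; ring
      rw [heq]
      constructor
      · exact div_pos one_pos (by linarith)
      · rw [div_lt_one (by linarith)]; linarith
    · simp only [if_neg (not_lt.2 h.le)]
      rw [sub_zero, sub_zero]
      constructor
      · exact div_pos one_pos hp
      · rw [div_lt_one hp]; exact h
  obtain ⟨hθ0, hθ1⟩ := hθ01
  have hkey : θ * p + (1 - θ) * a = 1 := by
    have hpa : p - a ≠ 0 := by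
      rw [ha_def]; rcases lt_or_gt_of_ne hp1 with h | h
      · simp only [if_pos h]; intro hc; nlinarith
      · simp only [if_neg (not_lt.2 h.le)]; intro hc; nlinarith
    rw [hθ_def]; field_simp; ring
  -- δ and the threshold from hlow
  set δ : ℝ := θ * ε / 2 with hδ_def
  have hδ0 : 0 < δ := by positivity
  have hδ1 : δ < 1 := by nlinarith [mul_le_mul_of_nonneg_left ha (sub_nonneg.2 hθ1.le)]
  obtain ⟨xδ, hxδ0, hxδ⟩ := hlow δ ⟨hδ0, hδ1⟩
  -- threshold from hwlog
  set C : ℝ := 2 * (1 - θ) / (θ * ε) with hC_def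
  obtain ⟨X, hX⟩ := eventually_atTop.1
    ((hwlog.eventually (eventually_ge_atTop C)).and (eventually_gt_atTop 1))
  refine ⟨max xδ (max X 1), lt_max_of_lt_left hxδ0, fun x hx => ?_⟩
  have hx1 : 1 < x := lt_of_le_of_lt (le_max_of_le_right (le_max_right X 1)) hx
  have hx0 : 0 < x := lt_trans one_pos hx1
  have hxwlog : C ≤ w x / Real.log x ∧ 1 < x :=
    hX x (le_of_lt (lt_of_le_of_lt (le_max_of_le_right (le_max_left X 1)) hx))
  have hlogx : 0 < Real.log x := Real.log_pos hx1
  have hwC : C * Real.log x ≤ w x := (le_div_iff₀ hlogx).1 hxwlog.1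
  have hwx : 0 < w x := hwpos x hx0
  have hxδ' : Real.exp ((1 - δ) * w x) ≤ ∫ u in Set.Ioc 0 x, Real.exp (w u) :=
    hxδ x (lt_of_le_of_lt (le_max_left _ _) hx)
  -- Hölder's inequality
  set μ := MeasureTheory.volume.restrict (Set.Ioc (0:ℝ) x) with hμ
  have hconj : Real.HolderConjugate (1/θ) (1/(1-θ)) := by
    rw [Real.holderConjugate_iff]
    constructor
    · rw [lt_div_iff₀ hθ0]; linarith
    · simp only [one_div, inv_inv]; ring
  have hθp : (0:ℝ) ≤ θ * p := by positivity
  have hθa : (0:ℝ) ≤ (1 - θ) * a := mul_nonneg (by linarith) ha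
  have hholder := MeasureTheory.integral_mul_le_Lp_mul_Lq_of_nonneg (μ := μ) hconj
    (f := fun u => Real.exp (θ * p * w u)) (g := fun u => Real.exp ((1 - θ) * a * w u))
    (Eventually.of_forall fun u => (Real.exp_pos _).le)
    (Eventually.of_forall fun u => (Real.exp_pos _).le)
    (aux_memLp w hm hx0 hθp _) (aux_memLp w hm hx0 hθa _)
  have hfg : ∀ u : ℝ, Real.exp (θ * p * w u) * Real.exp ((1 - θ) * a * w u) = Real.exp (w u) := by
    intro u
    rw [← Real.exp_add]
    congr 1
    linear_combination (w u) * hkey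
  have hfp : ∀ u : ℝ, Real.exp (θ * p * w u) ^ (1/θ) = Real.exp (p * w u) := by
    intro u
    rw [← Real.exp_mul]
    congr 1
    field_simp
  have hgq : ∀ u : ℝ, Real.exp ((1 - θ) * a * w u) ^ (1/(1-θ)) = Real.exp (a * w u) := by
    intro u
    rw [← Real.exp_mul]
    congr 1
    have : (1:ℝ) - θ ≠ 0 := by linarith
    field_simp
  simp only [hfg, hfp, hgq] at hholder
  rw [one_div_one_div, one_div_one_div] at hholder
  -- bound the second factor
  set Ip : ℝ := ∫ u in Set.Ioc 0 x, Real.exp (p * w u) with hIp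
  have hIp0 : 0 ≤ Ip := MeasureTheory.setIntegral_nonneg measurableSet_Ioc
    (fun u _ => (Real.exp_pos _).le)
  have hIa : (∫ u in Set.Ioc 0 x, Real.exp (a * w u)) ≤ x * Real.exp (a * w x) := by
    have h1 : (∫ u in Set.Ioc 0 x, Real.exp (a * w u)) ≤
        ∫ _ in Set.Ioc (0:ℝ) x, Real.exp (a * w x) := by
      apply MeasureTheory.setIntegral_mono_on (aux_intOn w hm hx0 ha)
        (integrableOn_const (by simp [Real.volume_Ioc])) measurableSet_Ioc
      intro u hu
      exact Real.exp_le_exp.2 (mul_le_mul_of_nonneg_left (hm hu.1 hx0 hu.2) ha)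
    have h2 : (∫ _ in Set.Ioc (0:ℝ) x, Real.exp (a * w x)) = x * Real.exp (a * w x) := by
      rw [MeasureTheory.setIntegral_const, measureReal_def, Real.volume_Ioc, smul_eq_mul]
      rw [ENNReal.toReal_ofReal (by linarith), sub_zero]
    linarith
  have hchain : Real.exp ((1 - δ) * w x) ≤ Ip ^ θ * (x * Real.exp (a * w x)) ^ (1 - θ) := by
    calc Real.exp ((1 - δ) * w x) ≤ ∫ u in Set.Ioc 0 x, Real.exp (w u) := hxδ'
    _ ≤ Ip ^ θ * (∫ u in Set.Ioc 0 x, Real.exp (a * w u)) ^ (1 - θ) := hholder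
    _ ≤ Ip ^ θ * (x * Real.exp (a * w x)) ^ (1 - θ) := by
        apply mul_le_mul_of_nonneg_left _ (Real.rpow_nonneg hIp0 θ)
        exact Real.rpow_le_rpow
          (MeasureTheory.setIntegral_nonneg measurableSet_Ioc fun u _ => (Real.exp_pos _).le)
          hIa (by linarith)
  -- the exponent comparison
  have hexp : Real.exp ((p - ε) * w x) ^ θ * (x * Real.exp (a * w x)) ^ (1 - θ) ≤
      Real.exp ((1 - δ) * w x) := by
    rw [← Real.exp_mul, Real.mul_rpow hx0.le (Real.exp_pos _).le, ← Real.exp_mul,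
      Real.rpow_def_of_pos hx0, ← Real.exp_add, ← Real.exp_add]
    apply Real.exp_le_exp.2
    have hC' : (θ * ε / 2) * (C * Real.log x) = (1 - θ) * Real.log x := by
      rw [hC_def]; field_simp
    have h3 : (1 - θ) * Real.log x ≤ (θ * ε / 2) * w x := by
      rw [← hC']
      apply mul_le_mul_of_nonneg_left hwC (by positivity)
    have hkeyw : (θ * p + (1 - θ) * a) * w x = w x := by rw [hkey, one_mul]
    rw [hδ_def]
    nlinarith [hkeyw, h3]
  -- conclude
  have hfinal : Real.exp ((p - ε) * w x) ^ θ ≤ Ip ^ θ := by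
    have hpos : (0:ℝ) < (x * Real.exp (a * w x)) ^ (1 - θ) :=
      Real.rpow_pos_of_pos (by positivity) _
    calc Real.exp ((p - ε) * w x) ^ θ
        = (Real.exp ((p - ε) * w x) ^ θ * (x * Real.exp (a * w x)) ^ (1 - θ)) /
          (x * Real.exp (a * w x)) ^ (1 - θ) := by field_simp
      _ ≤ Real.exp ((1 - δ) * w x) / (x * Real.exp (a * w x)) ^ (1 - θ) := by
          exact (div_le_div_iff_of_pos_right hpos).2 hexp
      _ ≤ Ip ^ θ := by
          rw [div_le_iff₀ hpos]; exact hchain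
  have h4 := Real.rpow_le_rpow (Real.rpow_nonneg (Real.exp_pos _).le θ) hfinal
    (inv_pos.2 hθ0).le
  rwa [← Real.rpow_mul (Real.exp_pos _).le, ← Real.rpow_mul hIp0,
    mul_inv_cancel₀ hθ0.ne', Real.rpow_one, Real.rpow_one] at h4
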